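/- Suppose each f_j is strictly convex, so that t(x) = 0 if and only if d(x) = 0. Then t(x) < 0 holds if and only if x is not a critical point of the multi-objective problem min (F_1,…,F_m). -/

import Mathlib

open Filter Topology Finset
open scoped RealInnerProductSpace

noncomputable section

/-- One-sided directional derivative: `c = F'(x; d) = lim_{α→0⁺} (F(x+αd) − F(x))/α`. -/
def HasDirDeriv {n : ℕ} (F : EuclideanSpace ℝ (Fin n) → ℝ)
    (x d : EuclideanSpace ℝ (Fin n)) (c : ℝ) : Prop :=
  Filter.Tendsto (fun α : ℝ => (F (x + α • d) - F x) / α) (nhdsWithin 0 (Set.Ioi 0)) (nhds c)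

/-- Subdifferential of a convex function: `∂h(x) = {ξ : h(y) ≥ h(x) + ⟪ξ, y − x⟫ ∀ y}`. -/
def subdiff {n : ℕ} (h : EuclideanSpace ℝ (Fin n) → ℝ) (x : EuclideanSpace ℝ (Fin n)) :
    Set (EuclideanSpace ℝ (Fin n)) :=
  {ξ | ∀ y, h x + ⟪ξ, y - x⟫ ≤ h y}

/-- `Q_j(x,d) = ∇f_j(x)ᵀd + ½ dᵀ∇²f_j(x)d + g_j(x+d) − g_j(x)`, where the Hessian is
the Fréchet derivative of the gradient. -/
def Qj {n m : ℕ} (f g : Fin (m + 1) → EuclideanSpace ℝ (Fin n) → ℝ)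
    (j : Fin (m + 1)) (x d : EuclideanSpace ℝ (Fin n)) : ℝ :=
  ⟪gradient (f j) x, d⟫ + (1 / 2) * ⟪(fderiv ℝ (gradient (f j)) x) d, d⟫
    + g j (x + d) - g j x

/-- `Q(x,d) = max_{1 ≤ j ≤ m} Q_j(x,d)`. -/
def Qmax {n m : ℕ} (f g : Fin (m + 1) → EuclideanSpace ℝ (Fin n) → ℝ)
    (x d : EuclideanSpace ℝ (Fin n)) : ℝ :=
  Finset.univ.sup' Finset.univ_nonempty (fun j => Qj f g j x d)


section Helpers

variable {n : ℕ}

lemma inner_grad_eq (f : EuclideanSpace ℝ (Fin n) → ℝ) (x d : EuclideanSpace ℝ (Fin n)) :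
    ⟪gradient f x, d⟫ = fderiv ℝ f x d := by
  rw [gradient, InnerProductSpace.toDual_symm_apply]

lemma tendsto_f_quot (f : EuclideanSpace ℝ (Fin n) → ℝ) (hf : Differentiable ℝ f)
    (x d : EuclideanSpace ℝ (Fin n)) :
    Tendsto (fun α : ℝ => (f (x + α • d) - f x) / α) (𝓝[>] 0) (𝓝 ⟪gradient f x, d⟫) := by
  have hline : HasDerivAt (fun α : ℝ => x + α • d) d 0 := by
    simpa using ((hasDerivAt_id (0:ℝ)).smul_const d).const_add x
  have hfd : HasFDerivAt f (fderiv ℝ f x) ((fun α : ℝ => x + α • d) 0) := by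
    simpa using (hf ((fun α : ℝ => x + α • d) 0)).hasFDerivAt
  have hcomp : HasDerivAt (fun α : ℝ => f (x + α • d)) (fderiv ℝ f x d) 0 := by
    have h0 : fderiv ℝ f ((fun α : ℝ => x + α • d) 0) = fderiv ℝ f x := by simp
    exact hfd.comp_hasDerivAt 0 hline
  have := (hasDerivAt_iff_tendsto_slope.mp hcomp).mono_left
    (nhdsWithin_mono 0 (fun a ha => ne_of_gt ha))
  rw [inner_grad_eq]
  refine this.congr (fun α => ?_)
  simp [slope_def_field]

lemma Qj_smul_expand {m : ℕ} (f g : Fin (m + 1) → EuclideanSpace ℝ (Fin n) → ℝ)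
    (j : Fin (m + 1)) (x d : EuclideanSpace ℝ (Fin n)) (α : ℝ) :
    Qj f g j x (α • d) = α * ⟪gradient (f j) x, d⟫
      + (α ^ 2 / 2) * ⟪(fderiv ℝ (gradient (f j)) x) d, d⟫ + g j (x + α • d) - g j x := by
  simp only [Qj, map_smul, real_inner_smul_right, real_inner_smul_left]
  ring

lemma tendsto_Qj_quot {m : ℕ} (f g : Fin (m + 1) → EuclideanSpace ℝ (Fin n) → ℝ)
    (j : Fin (m + 1)) (hf : Differentiable ℝ (f j))
    (x d : EuclideanSpace ℝ (Fin n)) (c : ℝ)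
    (hc : HasDirDeriv (fun y => f j y + g j y) x d c) :
    Tendsto (fun α : ℝ => Qj f g j x (α • d) / α) (𝓝[>] 0) (𝓝 c) := by
  set L := ⟪gradient (f j) x, d⟫ with hL
  set H := ⟪(fderiv ℝ (gradient (f j)) x) d, d⟫ with hH
  have h1 := tendsto_f_quot (f j) hf x d
  have h3 : Tendsto (fun α : ℝ => (g j (x + α • d) - g j x) / α) (𝓝[>] 0) (𝓝 (c - L)) := by
    refine ((hc.sub h1).congr fun α => ?_)
    rw [div_sub_div_same]; ring_nf
  have h4 : Tendsto (fun α : ℝ => α / 2 * H) (𝓝[>] 0) (𝓝 0) := by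
    have hcont : Continuous fun α : ℝ => α / 2 * H := by continuity
    simpa using (hcont.tendsto 0).mono_left nhdsWithin_le_nhds
  have hfin : Tendsto (fun α : ℝ => L + α / 2 * H + (g j (x + α • d) - g j x) / α)
      (𝓝[>] 0) (𝓝 (L + 0 + (c - L))) := (tendsto_const_nhds.add h4).add h3
  have hval : L + 0 + (c - L) = c := by ring
  rw [hval] at hfin
  refine hfin.congr' ?_
  have key : ∀ (L' H' A B α : ℝ), α ≠ 0 →
      (α * L' + α ^ 2 / 2 * H' + A - B) / α = L' + α / 2 * H' + (A - B) / α := by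
    intros L' H' A B α hα
    field_simp
    ring
  filter_upwards [self_mem_nhdsWithin] with α (hα : (0:ℝ) < α)
  rw [Qj_smul_expand]
  exact (key _ _ _ _ α hα.ne').symm

lemma Qj_zero {m : ℕ} (f g : Fin (m + 1) → EuclideanSpace ℝ (Fin n) → ℝ)
    (j : Fin (m + 1)) (x : EuclideanSpace ℝ (Fin n)) : Qj f g j x 0 = 0 := by
  simp [Qj]

lemma Qmax_zero {m : ℕ} (f g : Fin (m + 1) → EuclideanSpace ℝ (Fin n) → ℝ)
    (x : EuclideanSpace ℝ (Fin n)) : Qmax f g x 0 = 0 := by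
  simp [Qmax, Qj_zero]

end Helpers

/-- with each `f_j` strictly convex (positive definite Hessian), `d(x)` the
unique global minimizer of `d ↦ Q(x,d)` and `t(x) = Q(x,d(x))`: `t(x) < 0` if and only if
`x` is not a critical point of `min (F_1,…,F_m)` with `F_j = f_j + g_j`. -/
theorem t_neg_iff_noncritical {n m : ℕ}
    (f g : Fin (m + 1) → EuclideanSpace ℝ (Fin n) → ℝ)
    (hfstrict : ∀ j, StrictConvexOn ℝ Set.univ (f j))
    (hfC2 : ∀ j, ContDiff ℝ 2 (f j))
    (hfposdef : ∀ j (y d : EuclideanSpace ℝ (Fin n)), d ≠ 0 →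
      0 < ⟪(fderiv ℝ (gradient (f j)) y) d, d⟫)
    (hgconv : ∀ j, ConvexOn ℝ Set.univ (g j))
    (hgcont : ∀ j, Continuous (g j))
    (x dx : EuclideanSpace ℝ (Fin n)) (t : ℝ)
    (hmin : ∀ d, Qmax f g x dx ≤ Qmax f g x d)
    (huniq : ∀ d, (∀ d', Qmax f g x d ≤ Qmax f g x d') → d = dx)
    (ht : t = Qmax f g x dx)
    (F' : Fin (m + 1) → EuclideanSpace ℝ (Fin n) → ℝ)
    (hF' : ∀ j d, HasDirDeriv (fun y => f j y + g j y) x d (F' j d)) :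
    t < 0 ↔
      ¬ (∀ d : EuclideanSpace ℝ (Fin n),
          0 ≤ Finset.univ.sup' Finset.univ_nonempty (fun j => F' j d)) := by
  have hfdiff : ∀ j, Differentiable ℝ (f j) := fun j => (hfC2 j).differentiable (by norm_num)
  have hQtend : ∀ j (d : EuclideanSpace ℝ (Fin n)),
      Tendsto (fun α : ℝ => Qj f g j x (α • d) / α) (𝓝[>] 0) (𝓝 (F' j d)) :=
    fun j d => tendsto_Qj_quot f g j (hfdiff j) x d _ (hF' j d)
  constructor
  · intro ht0 hcrit
    have hdx : dx ≠ 0 := by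
      rintro rfl
      rw [ht, Qmax_zero] at ht0
      exact lt_irrefl 0 ht0
    have hkey : ∀ j, F' j dx < 0 := by
      intro j
      set H := ⟪(fderiv ℝ (gradient (f j)) x) dx, dx⟫ with hH
      have hHpos : 0 < H := hfposdef j x dx hdx
      have hbound : ∀ᶠ α in 𝓝[>] (0:ℝ),
          Qj f g j x (α • dx) / α ≤ Qj f g j x dx - H / 4 := by
        filter_upwards [Ioo_mem_nhdsGT_of_mem
          (Set.left_mem_Ico.2 (by norm_num : (0:ℝ) < 1/2))] with α hα
        obtain ⟨hα0, hα2⟩ := hα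
        have hgb : g j (x + α • dx) ≤ g j x + α * (g j (x + dx) - g j x) := by
          have hc := (hgconv j).2 (Set.mem_univ x) (Set.mem_univ (x + dx))
            (by linarith : (0:ℝ) ≤ 1 - α) (le_of_lt hα0) (by ring)
          have hpt : (1 - α) • x + α • (x + dx) = x + α • dx := by module
          rw [hpt] at hc
          simp only [smul_eq_mul] at hc
          nlinarith [hc]
        have hexp := Qj_smul_expand f g j x dx α
        have hQ1 : Qj f g j x dx
            = ⟪gradient (f j) x, dx⟫ + 1/2 * H + g j (x + dx) - g j x := by
          rw [Qj, hH]
        have h6 : α ^ 2 / 2 * H ≤ α * (H / 4) := by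
          nlinarith [mul_nonneg (mul_nonneg hα0.le hHpos.le)
            (show (0:ℝ) ≤ 1/4 - α/2 by linarith)]
        rw [div_le_iff₀ hα0, hexp, hQ1]
        nlinarith [hgb, h6]
      have hle : F' j dx ≤ Qj f g j x dx - H / 4 := le_of_tendsto (hQtend j dx) hbound
      have hQt : Qj f g j x dx ≤ t := by
        rw [ht, Qmax]; exact Finset.le_sup' (fun j => Qj f g j x dx) (Finset.mem_univ j)
      linarith
    have hsup : Finset.univ.sup' Finset.univ_nonempty (fun j => F' j dx) < 0 := by
      rw [Finset.sup'_lt_iff]; exact fun j _ => hkey j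
    exact absurd (hcrit dx) (not_le.2 hsup)
  · intro hnc
    push_neg at hnc
    obtain ⟨d, hd⟩ := hnc
    have hFneg : ∀ j, F' j d < 0 := fun j =>
      lt_of_le_of_lt (Finset.le_sup' (fun j => F' j d) (Finset.mem_univ j)) hd
    have hev : ∀ᶠ α in 𝓝[>] (0:ℝ), ∀ j, Qj f g j x (α • d) / α < 0 :=
      eventually_all.2 fun j => (hQtend j d).eventually (eventually_lt_nhds (hFneg j))
    obtain ⟨α, hαQ, hα0⟩ := (hev.and self_mem_nhdsWithin).exists
    have hα : (0:ℝ) < α := hα0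
    have hQneg : ∀ j, Qj f g j x (α • d) < 0 := by
      intro j
      rcases div_neg_iff.mp (hαQ j) with ⟨_, h⟩ | ⟨h, _⟩
      · linarith
      · exact h
    have hQm : Qmax f g x (α • d) < 0 := by
      rw [Qmax, Finset.sup'_lt_iff]; exact fun j _ => hQneg j
    calc t ≤ Qmax f g x (α • d) := ht ▸ hmin _
      _ < 0 := hQm
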